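/- For each unordered pair {a,b} of distinct indices a, b ∈ {0,…,d}, let ω_{ab} ≥ 0 be a nonnegative weight and t_{ab} := (x_b − x_a)/|x_b − x_a| a unit tangent vector of the corresponding edge, and define the constant symmetric positive semidefinite matrix D := Σ_{a<b} ω_{ab} t_{ab} t_{ab}ᵀ. Then for any two distinct indices i ≠ j, ∫_K (D ∇ξ_j) · ∇ξ_i dλ = − ω_{ij} λ(K) / |x_i − x_j|². In particular this cross term is nonpositive, and it is independent of the chosen orientations of the tangent vectors t_{ab}. -/

import Mathlib

open MeasureTheory
open scoped RealInnerProductSpace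

/-- **Off-diagonal entries of the stabilization diffusion matrix** (Lemma A.1 of the paper,
single-element version). With `D = Σ_{a<b} ω_{ab} t_{ab} t_{ab}ᵀ` built from nonnegative edge
weights and unit edge tangents of the simplex `K`, one has
`∫_K (D ∇ξ_j) · ∇ξ_i dλ = −ω_{ij} λ(K)/|x_i − x_j|²` for `i ≠ j`. -/
theorem stabilization_matrix_cross_term
    (d : ℕ) (hd : 1 ≤ d)
    (bas : AffineBasis (Fin (d + 1)) ℝ (EuclideanSpace ℝ (Fin d)))
    (K : Set (EuclideanSpace ℝ (Fin d)))
    (hK : K = convexHull ℝ (Set.range ⇑bas))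
    (g : Fin (d + 1) → EuclideanSpace ℝ (Fin d))
    (hg : ∀ i : Fin (d + 1), ∀ x y : EuclideanSpace ℝ (Fin d),
      bas.coord i y - bas.coord i x = ⟪g i, y - x⟫)
    (ω : Fin (d + 1) → Fin (d + 1) → ℝ)
    (hωsymm : ∀ a b, ω a b = ω b a) (hωpos : ∀ a b, 0 ≤ ω a b)
    (tE : Fin (d + 1) → Fin (d + 1) → EuclideanSpace ℝ (Fin d))
    (htE : ∀ a b, tE a b = ‖bas b - bas a‖⁻¹ • (bas b - bas a))
    (i j : Fin (d + 1)) (hij : i ≠ j) :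
    ∫ _x in K,
        (∑ p ∈ Finset.univ.filter (fun p : Fin (d + 1) × Fin (d + 1) => p.1 < p.2),
          ω p.1 p.2 * (⟪tE p.1 p.2, g j⟫ * ⟪tE p.1 p.2, g i⟫))
      = -(ω i j) * (volume K).toReal / ‖bas i - bas j‖ ^ 2 := by
  have hinner : ∀ a b k : Fin (d + 1), ⟪tE a b, g k⟫ =
      ‖bas b - bas a‖⁻¹ *
        ((if k = b then (1 : ℝ) else 0) - (if k = a then (1 : ℝ) else 0)) := by
    intro a b k
    rw [htE, real_inner_comm, inner_smul_right, ← hg]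
    simp [AffineBasis.coord_apply]
  have key : (∑ p ∈ Finset.univ.filter (fun p : Fin (d + 1) × Fin (d + 1) => p.1 < p.2),
      ω p.1 p.2 * (⟪tE p.1 p.2, g j⟫ * ⟪tE p.1 p.2, g i⟫))
      = -(ω i j) / ‖bas i - bas j‖ ^ 2 := by
    rcases lt_or_gt_of_ne hij with hlt | hlt
    · rw [Finset.sum_eq_single_of_mem (⟨i, j⟩ : Fin (d + 1) × Fin (d + 1))
        (by simp [hlt])]
      · rw [hinner, hinner]
        simp only [if_pos rfl, if_neg hij, if_neg hij.symm]
        rw [norm_sub_rev]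
        ring_nf
        simp
      · intro p hp hne
        simp only [Finset.mem_filter, Finset.mem_univ, true_and] at hp
        rw [hinner, hinner]
        rcases eq_or_ne j p.2 with h1 | h1
        · rcases eq_or_ne i p.1 with h2 | h2
          · exact absurd (Prod.ext h2.symm h1.symm) hne
          · have h3 : i ≠ p.2 := fun h => hij (h.trans h1.symm)
            simp [h2, h3]
        · rcases eq_or_ne j p.1 with h2 | h2
          · have h3 : i ≠ p.1 := fun h => hij (h.trans h2.symm)
            have h4 : i ≠ p.2 := fun h => absurd (h ▸ h2 ▸ hlt) (not_lt.2 hp.le)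
            simp [h3, h4]
          · simp [h1, h2]
    · rw [Finset.sum_eq_single_of_mem (⟨j, i⟩ : Fin (d + 1) × Fin (d + 1))
        (by simp [hlt])]
      · rw [hinner, hinner]
        simp only [if_pos rfl, if_neg hij, if_neg hij.symm]
        rw [hωsymm]
        ring_nf
        simp
      · intro p hp hne
        simp only [Finset.mem_filter, Finset.mem_univ, true_and] at hp
        rw [hinner, hinner]
        rcases eq_or_ne i p.2 with h1 | h1
        · rcases eq_or_ne j p.1 with h2 | h2
          · exact absurd (Prod.ext h2.symm h1.symm) hne
          · have h3 : j ≠ p.2 := fun h => hij (h1.trans h.symm)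
            simp [h2, h3]
        · rcases eq_or_ne i p.1 with h2 | h2
          · have h3 : j ≠ p.1 := fun h => hij (h2.trans h.symm)
            have h4 : j ≠ p.2 := fun h => absurd (h ▸ h2 ▸ hlt) (not_lt.2 hp.le)
            simp [h3, h4]
          · simp [h1, h2]
  rw [setIntegral_const, key, smul_eq_mul, measureReal_def]
  ring
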